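/- (Decoupling of the perturbed dynamics on the exceptional hypersurface, the key step in the proof of the b-KAM theorem.) Let n ≥ 2, c ≠ 0, k, k', ε ∈ ℝ, let h : ℝⁿ → ℝ be C¹, and let f(φ,y) = f₁(φ̃,y) + y₁·f₂(φ,y) + f₃(φ₁,y₁) with f₁ : ℝ^{n-1} × ℝⁿ → ℝ, f₂ : ℝⁿ × ℝⁿ → ℝ, f₃ : ℝ × ℝ → ℝ all C¹, where φ̃ = (φ₂,…,φₙ). Define h̄(ỹ) := h(0,ỹ) and f̄₁(φ̃,ỹ) := f₁(φ̃,(0,ỹ)) for ỹ ∈ ℝ^{n-1}. Then a C¹ curve t ↦ (φ₁(t), φ̃(t), y₁(t), ỹ(t)) with y₁(t) = 0 for all t is a solution of the perturbed b-Hamiltonian system if and only if: φ₁'(t) = (k+εk')/c for all t, and (φ̃, ỹ) is a solution of the standard Hamiltonian system of h̄ + εf̄₁ on ℝ^{n-1} × ℝ^{n-1}, namely φ̃' = ∂_{ỹ}(h̄ + εf̄₁)(φ̃,ỹ) and ỹ' = −∂_{φ̃}(h̄ + εf̄₁)(φ̃,ỹ). -/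

import Mathlib

/- We model `ℝⁿ × ℝⁿ` with `n = m + 1 ≥ 2` as `Pt m`, splitting the coordinates as
`(φ, y) = ((φ₁, φ̃), (y₁, ỹ))` with `φ̃ = (φ₂, …, φₙ)`, `ỹ = (y₂, …, yₙ)`. -/
abbrev Pt (m : ℕ) := (ℝ × (Fin m → ℝ)) × (ℝ × (Fin m → ℝ))

/-- `∂F/∂φ₁`. -/
noncomputable def pdPhi1 {m : ℕ} (F : Pt m → ℝ) (p : Pt m) : ℝ :=
  fderiv ℝ F p ((1, 0), (0, 0))

/-- `∂F/∂φᵢ₊₁` for `i : Fin m`. -/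
noncomputable def pdPhi {m : ℕ} (F : Pt m → ℝ) (p : Pt m) (i : Fin m) : ℝ :=
  fderiv ℝ F p ((0, Pi.single i 1), (0, 0))

/-- `∂F/∂y₁`. -/
noncomputable def pdY1 {m : ℕ} (F : Pt m → ℝ) (p : Pt m) : ℝ :=
  fderiv ℝ F p ((0, 0), (1, 0))

/-- `∂F/∂yᵢ₊₁` for `i : Fin m`. -/
noncomputable def pdY {m : ℕ} (F : Pt m → ℝ) (p : Pt m) (i : Fin m) : ℝ :=
  fderiv ℝ F p ((0, 0), (0, Pi.single i 1))

section Aux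
variable {m : ℕ}

/-- linear map `p ↦ (p.1.2, p.2)` -/
noncomputable def Lmap (m : ℕ) : Pt m →L[ℝ] (Fin m → ℝ) × (ℝ × (Fin m → ℝ)) :=
  ((ContinuousLinearMap.snd ℝ ℝ (Fin m → ℝ)).comp
    (ContinuousLinearMap.fst ℝ (ℝ × (Fin m → ℝ)) (ℝ × (Fin m → ℝ)))).prod
    (ContinuousLinearMap.snd ℝ (ℝ × (Fin m → ℝ)) (ℝ × (Fin m → ℝ)))

/-- linear map `p ↦ p.2.1` -/
noncomputable def Amap (m : ℕ) : Pt m →L[ℝ] ℝ :=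
  (ContinuousLinearMap.fst ℝ ℝ (Fin m → ℝ)).comp
    (ContinuousLinearMap.snd ℝ (ℝ × (Fin m → ℝ)) (ℝ × (Fin m → ℝ)))

/-- linear map `p ↦ (p.1.1, p.2.1)` -/
noncomputable def Bmap (m : ℕ) : Pt m →L[ℝ] ℝ × ℝ :=
  ((ContinuousLinearMap.fst ℝ ℝ (Fin m → ℝ)).comp
    (ContinuousLinearMap.fst ℝ (ℝ × (Fin m → ℝ)) (ℝ × (Fin m → ℝ)))).prod (Amap m)

theorem hasFDerivAt_f (f₁ : (Fin m → ℝ) × (ℝ × (Fin m → ℝ)) → ℝ) (hf₁ : ContDiff ℝ 1 f₁)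
    (f₂ : Pt m → ℝ) (hf₂ : ContDiff ℝ 1 f₂)
    (f₃ : ℝ × ℝ → ℝ) (hf₃ : ContDiff ℝ 1 f₃)
    (f : Pt m → ℝ)
    (hf : ∀ p : Pt m, f p = f₁ (p.1.2, p.2) + p.2.1 * f₂ p + f₃ (p.1.1, p.2.1))
    (p : Pt m) (hp : p.2.1 = 0) :
    HasFDerivAt f
      (((fderiv ℝ f₁ (p.1.2, p.2)).comp (Lmap m) + f₂ p • Amap m)
        + (fderiv ℝ f₃ (p.1.1, p.2.1)).comp (Bmap m)) p := by
  have hfe : f = fun p : Pt m => f₁ (p.1.2, p.2) + p.2.1 * f₂ p + f₃ (p.1.1, p.2.1) :=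
    funext hf
  rw [hfe]
  have d1 : HasFDerivAt (fun p : Pt m => f₁ (p.1.2, p.2))
      ((fderiv ℝ f₁ (p.1.2, p.2)).comp (Lmap m)) p :=
    (hf₁.differentiable one_ne_zero (p.1.2, p.2)).hasFDerivAt.comp p (Lmap m).hasFDerivAt
  have hA : HasFDerivAt (fun p : Pt m => p.2.1) (Amap m) p := (Amap m).hasFDerivAt
  have d2 : HasFDerivAt (fun p : Pt m => p.2.1 * f₂ p) (f₂ p • Amap m) p := by
    have := hA.mul (hf₂.differentiable one_ne_zero p).hasFDerivAt
    simp [hp] at this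
    exact this
  have d3 : HasFDerivAt (fun p : Pt m => f₃ (p.1.1, p.2.1))
      ((fderiv ℝ f₃ (p.1.1, p.2.1)).comp (Bmap m)) p :=
    (hf₃.differentiable one_ne_zero (p.1.1, p.2.1)).hasFDerivAt.comp p (Bmap m).hasFDerivAt
  exact (d1.add d2).add d3

theorem pdPhi_f (f₁ : (Fin m → ℝ) × (ℝ × (Fin m → ℝ)) → ℝ) (hf₁ : ContDiff ℝ 1 f₁)
    (f₂ : Pt m → ℝ) (hf₂ : ContDiff ℝ 1 f₂)
    (f₃ : ℝ × ℝ → ℝ) (hf₃ : ContDiff ℝ 1 f₃)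
    (f : Pt m → ℝ)
    (hf : ∀ p : Pt m, f p = f₁ (p.1.2, p.2) + p.2.1 * f₂ p + f₃ (p.1.1, p.2.1))
    (a₁ : ℝ) (a b : Fin m → ℝ) (i : Fin m) :
    pdPhi f ((a₁, a), (0, b)) i = fderiv ℝ f₁ (a, (0, b)) (Pi.single i 1, (0, 0)) := by
  rw [pdPhi, (hasFDerivAt_f f₁ hf₁ f₂ hf₂ f₃ hf₃ f hf ((a₁, a), (0, b)) rfl).fderiv]
  simp [Lmap, Amap, Bmap, Prod.mk_zero_zero]

theorem pdY_f (f₁ : (Fin m → ℝ) × (ℝ × (Fin m → ℝ)) → ℝ) (hf₁ : ContDiff ℝ 1 f₁)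
    (f₂ : Pt m → ℝ) (hf₂ : ContDiff ℝ 1 f₂)
    (f₃ : ℝ × ℝ → ℝ) (hf₃ : ContDiff ℝ 1 f₃)
    (f : Pt m → ℝ)
    (hf : ∀ p : Pt m, f p = f₁ (p.1.2, p.2) + p.2.1 * f₂ p + f₃ (p.1.1, p.2.1))
    (a₁ : ℝ) (a b : Fin m → ℝ) (i : Fin m) :
    pdY f ((a₁, a), (0, b)) i = fderiv ℝ f₁ (a, (0, b)) (0, (0, Pi.single i 1)) := by
  rw [pdY, (hasFDerivAt_f f₁ hf₁ f₂ hf₂ f₃ hf₃ f hf ((a₁, a), (0, b)) rfl).fderiv]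
  simp [Lmap, Amap, Bmap, Prod.mk_zero_zero]

/-- linear map `q ↦ (0, q.2)` -/
noncomputable def Mmap (m : ℕ) : ((Fin m → ℝ) × (Fin m → ℝ)) →L[ℝ] ℝ × (Fin m → ℝ) :=
  (0 : ((Fin m → ℝ) × (Fin m → ℝ)) →L[ℝ] ℝ).prod
    (ContinuousLinearMap.snd ℝ (Fin m → ℝ) (Fin m → ℝ))

/-- linear map `q ↦ (q.1, (0, q.2))` -/
noncomputable def Nmap (m : ℕ) :
    ((Fin m → ℝ) × (Fin m → ℝ)) →L[ℝ] (Fin m → ℝ) × (ℝ × (Fin m → ℝ)) :=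
  (ContinuousLinearMap.fst ℝ (Fin m → ℝ) (Fin m → ℝ)).prod (Mmap m)

theorem hasFDerivAt_Hred (ε : ℝ) (h : ℝ × (Fin m → ℝ) → ℝ) (hh : ContDiff ℝ 1 h)
    (f₁ : (Fin m → ℝ) × (ℝ × (Fin m → ℝ)) → ℝ) (hf₁ : ContDiff ℝ 1 f₁)
    (Hred : (Fin m → ℝ) × (Fin m → ℝ) → ℝ)
    (hHred : ∀ q : (Fin m → ℝ) × (Fin m → ℝ),
      Hred q = h (0, q.2) + ε * f₁ (q.1, (0, q.2)))
    (q : (Fin m → ℝ) × (Fin m → ℝ)) :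
    HasFDerivAt Hred
      ((fderiv ℝ h (0, q.2)).comp (Mmap m)
        + ε • (fderiv ℝ f₁ (q.1, (0, q.2))).comp (Nmap m)) q := by
  rw [funext hHred]
  have d1 : HasFDerivAt (fun q : (Fin m → ℝ) × (Fin m → ℝ) => h (0, q.2))
      ((fderiv ℝ h (0, q.2)).comp (Mmap m)) q :=
    (hh.differentiable one_ne_zero (0, q.2)).hasFDerivAt.comp q (Mmap m).hasFDerivAt
  have d2 : HasFDerivAt (fun q : (Fin m → ℝ) × (Fin m → ℝ) => f₁ (q.1, (0, q.2)))
      ((fderiv ℝ f₁ (q.1, (0, q.2))).comp (Nmap m)) q :=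
    (hf₁.differentiable one_ne_zero (q.1, (0, q.2))).hasFDerivAt.comp q (Nmap m).hasFDerivAt
  exact d1.add (d2.const_mul ε)

theorem fderiv_Hred_phi (ε : ℝ) (h : ℝ × (Fin m → ℝ) → ℝ) (hh : ContDiff ℝ 1 h)
    (f₁ : (Fin m → ℝ) × (ℝ × (Fin m → ℝ)) → ℝ) (hf₁ : ContDiff ℝ 1 f₁)
    (Hred : (Fin m → ℝ) × (Fin m → ℝ) → ℝ)
    (hHred : ∀ q : (Fin m → ℝ) × (Fin m → ℝ),
      Hred q = h (0, q.2) + ε * f₁ (q.1, (0, q.2)))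
    (a b : Fin m → ℝ) (i : Fin m) :
    fderiv ℝ Hred (a, b) (0, Pi.single i 1)
      = fderiv ℝ h (0, b) (0, Pi.single i 1)
        + ε * fderiv ℝ f₁ (a, (0, b)) (0, (0, Pi.single i 1)) := by
  rw [(hasFDerivAt_Hred ε h hh f₁ hf₁ Hred hHred (a, b)).fderiv]
  simp [Mmap, Nmap]

theorem fderiv_Hred_y (ε : ℝ) (h : ℝ × (Fin m → ℝ) → ℝ) (hh : ContDiff ℝ 1 h)
    (f₁ : (Fin m → ℝ) × (ℝ × (Fin m → ℝ)) → ℝ) (hf₁ : ContDiff ℝ 1 f₁)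
    (Hred : (Fin m → ℝ) × (Fin m → ℝ) → ℝ)
    (hHred : ∀ q : (Fin m → ℝ) × (Fin m → ℝ),
      Hred q = h (0, q.2) + ε * f₁ (q.1, (0, q.2)))
    (a b : Fin m → ℝ) (i : Fin m) :
    fderiv ℝ Hred (a, b) (Pi.single i 1, 0)
      = ε * fderiv ℝ f₁ (a, (0, b)) (Pi.single i 1, (0, 0)) := by
  rw [(hasFDerivAt_Hred ε h hh f₁ hf₁ Hred hHred (a, b)).fderiv]
  simp [Mmap, Nmap, Prod.mk_zero_zero]

end Aux

/-- (Decoupling of the perturbed dynamics on the exceptional hypersurface, the key step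
in the proof of the b-KAM theorem.)  Let `f(φ,y) = f₁(φ̃,y) + y₁·f₂(φ,y) + f₃(φ₁,y₁)`
with `h, f₁, f₂, f₃` all `C¹`, and let `Hred(φ̃,ỹ) = h̄(ỹ) + ε f̄₁(φ̃,ỹ)` where
`h̄(ỹ) = h(0,ỹ)` and `f̄₁(φ̃,ỹ) = f₁(φ̃,(0,ỹ))`.  A `C¹` curve
`t ↦ (φ₁(t), φ̃(t), y₁(t), ỹ(t))` with `y₁ ≡ 0` is a solution of the perturbed
b-Hamiltonian system if and only if `φ₁' = (k+εk')/c` and `(φ̃, ỹ)` solves the standard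
Hamiltonian system of `h̄ + εf̄₁` on `ℝ^{n-1} × ℝ^{n-1}`. -/
theorem stmt2 (m : ℕ) (hm : 1 ≤ m) (c : ℝ) (hc : c ≠ 0) (k k' ε : ℝ)
    (h : ℝ × (Fin m → ℝ) → ℝ) (hh : ContDiff ℝ 1 h)
    (f₁ : (Fin m → ℝ) × (ℝ × (Fin m → ℝ)) → ℝ) (hf₁ : ContDiff ℝ 1 f₁)
    (f₂ : Pt m → ℝ) (hf₂ : ContDiff ℝ 1 f₂)
    (f₃ : ℝ × ℝ → ℝ) (hf₃ : ContDiff ℝ 1 f₃)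
    (f : Pt m → ℝ)
    (hf : ∀ p : Pt m, f p = f₁ (p.1.2, p.2) + p.2.1 * f₂ p + f₃ (p.1.1, p.2.1))
    (Hred : (Fin m → ℝ) × (Fin m → ℝ) → ℝ)
    (hHred : ∀ q : (Fin m → ℝ) × (Fin m → ℝ),
      Hred q = h (0, q.2) + ε * f₁ (q.1, (0, q.2)))
    (φ1 : ℝ → ℝ) (φt : ℝ → Fin m → ℝ) (y1 : ℝ → ℝ) (yt : ℝ → Fin m → ℝ)
    (hcurve : ContDiff ℝ 1 (fun t : ℝ => (((φ1 t, φt t), (y1 t, yt t)) : Pt m)))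
    (hy1 : ∀ t : ℝ, y1 t = 0) :
    (∀ t : ℝ,
      HasDerivAt φ1
        ((k + ε * k') / c + (y1 t / c) *
          (fderiv ℝ h (y1 t, yt t) (1, 0) +
            ε * pdY1 f ((φ1 t, φt t), (y1 t, yt t)))) t ∧
      (∀ i : Fin m, HasDerivAt (fun s => φt s i)
        (fderiv ℝ h (y1 t, yt t) (0, Pi.single i 1) +
          ε * pdY f ((φ1 t, φt t), (y1 t, yt t)) i) t) ∧
      HasDerivAt y1
        (-(ε * (y1 t / c) * pdPhi1 f ((φ1 t, φt t), (y1 t, yt t)))) t ∧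
      (∀ i : Fin m, HasDerivAt (fun s => yt s i)
        (-(ε * pdPhi f ((φ1 t, φt t), (y1 t, yt t)) i)) t))
    ↔
    ((∀ t : ℝ, HasDerivAt φ1 ((k + ε * k') / c) t) ∧
      (∀ t : ℝ, ∀ i : Fin m, HasDerivAt (fun s => φt s i)
        (fderiv ℝ Hred (φt t, yt t) (0, Pi.single i 1)) t) ∧
      (∀ t : ℝ, ∀ i : Fin m, HasDerivAt (fun s => yt s i)
        (-fderiv ℝ Hred (φt t, yt t) (Pi.single i 1, 0)) t)) := by
  constructor
  · intro H
    refine ⟨fun t => ?_, fun t i => ?_, fun t i => ?_⟩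
    · simpa [hy1 t] using (H t).1
    · have h2 := (H t).2.1 i
      rw [hy1 t, pdY_f f₁ hf₁ f₂ hf₂ f₃ hf₃ f hf] at h2
      rw [fderiv_Hred_phi ε h hh f₁ hf₁ Hred hHred]
      exact h2
    · have h2 := (H t).2.2.2 i
      rw [hy1 t, pdPhi_f f₁ hf₁ f₂ hf₂ f₃ hf₃ f hf] at h2
      rw [fderiv_Hred_y ε h hh f₁ hf₁ Hred hHred]
      exact h2
  · intro H t
    refine ⟨?_, fun i => ?_, ?_, fun i => ?_⟩
    · simpa [hy1 t] using H.1 t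
    · have h2 := H.2.1 t i
      rw [fderiv_Hred_phi ε h hh f₁ hf₁ Hred hHred] at h2
      rw [hy1 t, pdY_f f₁ hf₁ f₂ hf₂ f₃ hf₃ f hf]
      exact h2
    · have hz : y1 = fun _ => (0 : ℝ) := funext hy1
      rw [hz]
      simpa using hasDerivAt_const t (0 : ℝ)
    · have h2 := H.2.2 t i
      rw [fderiv_Hred_y ε h hh f₁ hf₁ Hred hHred] at h2
      rw [hy1 t, pdPhi_f f₁ hf₁ f₂ hf₂ f₃ hf₃ f hf]
      exact h2
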